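/- For all nonnegative integers n and positive integers a, the sum over k from 0 to floor(n/2) of (1/(3k+a)) * C(3k+a, k) * C(n+a+k-1, n-2k) equals (1/(2n+a)) * C(2n+a, n). -/

import Mathlib

open Finset
set_option maxHeartbeats 1000000

lemma ch1 (m r : ℕ) : (((m+1).choose (r+1) : ℕ) : ℚ) * (r+1) = ((m:ℚ)+1) * (m.choose r : ℚ) := by
  have h := Nat.add_one_mul_choose_eq m r
  have h2 := congrArg (Nat.cast : ℕ → ℚ) h
  push_cast at h2
  linarith

lemma ch2 (m r : ℕ) : ((m.choose (r+1) : ℕ) : ℚ) * (r+1) = (m.choose r : ℚ) * ((m:ℚ) - r) := by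
  rcases le_or_gt r m with h | h
  · have h2 := congrArg (Nat.cast : ℕ → ℚ) (Nat.choose_succ_right_eq m r)
    push_cast [Nat.cast_sub h] at h2
    linarith
  · have h1 : m.choose (r+1) = 0 := Nat.choose_eq_zero_of_lt (by omega)
    have h2 : m.choose r = 0 := Nat.choose_eq_zero_of_lt h
    rw [h1, h2]; push_cast; ring

lemma ch3 (m r : ℕ) : (((m+1).choose r : ℕ) : ℚ) * ((m:ℚ)+1-r) = ((m:ℚ)+1) * (m.choose r : ℚ) := by
  have h1 := ch1 m r
  have h2 := ch2 (m+1) r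
  push_cast at h2
  linear_combination h1 - h2

def fq (a n k : ℕ) : ℚ :=
  (1 / (3 * (k : ℚ) + a)) * ((3 * k + a).choose k) * ((n + a + k - 1).choose (n - 2 * k))

def gq (a n : ℕ) : ℕ → ℚ
  | 0 => 0
  | (i+1) =>
    if 2*i+2 ≤ n+1 then
      -((3*(n:ℚ)+2*a+1)/((n:ℚ)+a)) * ((i:ℚ)+1) * ((3*i+a+1).choose (i+1)) * ((n+a+i).choose (n-1-2*i))
    else 0

lemma step (a n k : ℕ) (ha : 0 < a) (hk : 2*k ≤ n+1) :
    ((n:ℚ)+1) * ((n:ℚ)+(a:ℚ)+1) * fq a (n+1) k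
      - (if 2*k ≤ n then (2*(n:ℚ)+a) * (2*(n:ℚ)+a+1) * fq a n k else 0)
    = gq a n (k+1) - gq a n k := by
  obtain ⟨b, rfl⟩ : ∃ b, a = b+1 := ⟨a-1, by omega⟩
  have hb : (0:ℚ) ≤ (b:ℚ) := by positivity
  rcases Nat.eq_zero_or_pos k with rfl | hkpos
  · rw [if_pos (by omega)]
    rcases Nat.eq_zero_or_pos n with rfl | hnpos
    · simp only [fq, gq]
      norm_num
      have hb1 : ((b:ℚ)+1) ≠ 0 := by positivity
      field_simp
      ring
    · obtain ⟨m, rfl⟩ : ∃ m, n = m+1 := ⟨n-1, by omega⟩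
      simp only [fq, gq]
      norm_num
      rw [show m+1+1+b = m+b+1+1 by omega, show m+1+b = m+b+1 by omega,
          show m+1+(b+1) = m+b+1+1 by omega]
      have hX1 := ch1 (m+b+1) (m+1)
      have hY := ch3 (m+b+1) (m+1)
      have hX3 := ch2 (m+b+1+1) m
      push_cast at hX1 hY hX3
      have eX1 : (((m+b+1+1).choose (m+1+1)) : ℚ)
          = ((m:ℚ)+b+2) * (((m+b+1).choose (m+1)) : ℚ) / ((m:ℚ)+2) := by
        rw [eq_div_iff (by positivity)]; linear_combination hX1
      have eY : (((m+b+1+1).choose (m+1)) : ℚ)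
          = ((m:ℚ)+b+2) * (((m+b+1).choose (m+1)) : ℚ) / ((b:ℚ)+1) := by
        rw [eq_div_iff (by positivity)]; linear_combination hY
      have eX3 : (((m+b+1+1).choose m) : ℚ)
          = ((m:ℚ)+1) * (((m+b+1+1).choose (m+1)) : ℚ) / ((b:ℚ)+2) := by
        rw [eq_div_iff (by positivity)]; linear_combination -hX3
      rw [eX3, eY, eX1]
      have d1 : ((b:ℚ)+1) ≠ 0 := by positivity
      have d2 : ((m:ℚ)+1+((b:ℚ)+1)) ≠ 0 := by positivity
      have d3 : ((m:ℚ)+b+2) ≠ 0 := by positivity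
      field_simp
      ring
  · obtain ⟨i, rfl⟩ : ∃ i, k = i+1 := ⟨k-1, by omega⟩
    have hsplit : n = 2*i+1 ∨ n = 2*i+2 ∨ ∃ j, n = 2*i+3+j := by
      rcases Nat.lt_or_ge n (2*i+3) with h | h
      · omega
      · right; right; exact ⟨n-(2*i+3), by omega⟩
    -- common facts about P-chain
    rcases hsplit with rfl | rfl | ⟨j, rfl⟩
    · rw [if_neg (by omega)]
      simp only [fq, gq]
      norm_num
      rw [show 2*i+1+1-2*(i+1) = 0 by omega]
      rw [Nat.choose_zero_right]
      rw [show 3*(i+1)+(b+1) = 3*i+b+4 by omega]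
      rw [show 3*i+(b+1)+1 = 3*i+b+2 by omega]
      have hU := ch3 (3*i+b+3) (i+1)
      rw [show 3*i+b+3+1 = 3*i+b+4 by omega] at hU
      have hP := ch3 (3*i+b+2) (i+1)
      rw [show 3*i+b+2+1 = 3*i+b+3 by omega] at hP
      push_cast at hU hP
      have eU : (((3*i+b+3).choose (i+1)) : ℚ)
          = (2*(i:ℚ)+b+3) * (((3*i+b+4).choose (i+1)) : ℚ) / (3*(i:ℚ)+b+4) := by
        rw [eq_div_iff (by positivity)]; linear_combination -hU
      have eP : (((3*i+b+2).choose (i+1)) : ℚ)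
          = (2*(i:ℚ)+b+2) * (((3*i+b+3).choose (i+1)) : ℚ) / (3*(i:ℚ)+b+3) := by
        rw [eq_div_iff (by positivity)]; linear_combination -hP
      rw [eP, eU]
      have d1 : (3*(i:ℚ)+b+4) ≠ 0 := by positivity
      have d2 : (3*(i:ℚ)+b+3) ≠ 0 := by positivity
      have d3 : (3*((i:ℚ)+1)+((b:ℚ)+1)) ≠ 0 := by positivity
      have d4 : (2*(i:ℚ)+1+((b:ℚ)+1)) ≠ 0 := by positivity
      field_simp
      ring
    · rw [if_pos (by omega)]
      simp only [fq, gq]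
      norm_num
      rw [if_neg (by omega : ¬ 2*(i+1) ≤ 2*i+1)]
      rw [show 2*i+2+1-2*(i+1) = 1 by omega]
      rw [show 2*i+2-2*(i+1) = 0 by omega]
      rw [Nat.choose_zero_right, Nat.choose_one_right]
      rw [show 2*i+2+1+(b+1)+i = 3*i+b+4 by omega]
      rw [show 3*(i+1)+(b+1) = 3*i+b+4 by omega]
      rw [show 3*i+(b+1)+1 = 3*i+b+2 by omega]
      have hU := ch3 (3*i+b+3) (i+1)
      rw [show 3*i+b+3+1 = 3*i+b+4 by omega] at hU
      have hP := ch3 (3*i+b+2) (i+1)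
      rw [show 3*i+b+2+1 = 3*i+b+3 by omega] at hP
      push_cast at hU hP
      have eU : (((3*i+b+3).choose (i+1)) : ℚ)
          = (2*(i:ℚ)+b+3) * (((3*i+b+4).choose (i+1)) : ℚ) / (3*(i:ℚ)+b+4) := by
        rw [eq_div_iff (by positivity)]; linear_combination -hU
      have eP : (((3*i+b+2).choose (i+1)) : ℚ)
          = (2*(i:ℚ)+b+2) * (((3*i+b+3).choose (i+1)) : ℚ) / (3*(i:ℚ)+b+3) := by
        rw [eq_div_iff (by positivity)]; linear_combination -hP
      rw [eP, eU]
      have d1 : (3*(i:ℚ)+b+4) ≠ 0 := by positivity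
      have d2 : (3*(i:ℚ)+b+3) ≠ 0 := by positivity
      have d3 : (3*((i:ℚ)+1)+((b:ℚ)+1)) ≠ 0 := by positivity
      have d4 : (2*(i:ℚ)+2+((b:ℚ)+1)) ≠ 0 := by positivity
      field_simp
      push_cast
      ring
    · rw [if_pos (by omega)]
      simp only [fq, gq]
      norm_num
      rw [if_pos (by omega : 2*(i+1)+2 ≤ 2*i+3+j+1)]
      rw [if_pos (by omega : 2*i+2 ≤ 2*i+3+j+1)]
      rw [show 2*i+3+j+1-2*(i+1) = j+2 by omega]
      rw [show 2*i+3+j+1+(b+1)+i = 3*i+j+b+5 by omega]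
      rw [show 2*i+3+j-2*(i+1) = j+1 by omega]
      rw [show 2*i+3+j+(b+1)+(i+1) = 3*i+j+b+5 by omega]
      rw [show 2*i+3+j+(b+1)+i = 3*i+j+b+4 by omega]
      rw [show 3*(i+1)+(b+1)+1 = 3*i+b+5 by omega]
      rw [show 3*(i+1)+(b+1) = 3*i+b+4 by omega]
      rw [show 3*i+(b+1)+1 = 3*i+b+2 by omega]
      rw [show 2*i+2+j-2*(i+1) = j by omega]
      rw [show 2*i+2+j-2*i = j+2 by omega]
      rw [show i+1+1 = i+2 by omega]
      have hB' := ch1 (3*i+j+b+4) (j+1)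
      rw [show 3*i+j+b+4+1 = 3*i+j+b+5 by omega, show j+1+1 = j+2 by omega] at hB'
      have hQ := ch2 (3*i+j+b+4) (j+1)
      rw [show j+1+1 = j+2 by omega] at hQ
      have hT := ch2 (3*i+j+b+5) (j+1)
      rw [show j+1+1 = j+2 by omega] at hT
      have hS := ch2 (3*i+j+b+5) j
      have hR := ch1 (3*i+b+4) (i+1)
      rw [show 3*i+b+4+1 = 3*i+b+5 by omega, show i+1+1 = i+2 by omega] at hR
      have hU := ch3 (3*i+b+3) (i+1)
      rw [show 3*i+b+3+1 = 3*i+b+4 by omega] at hU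
      have hP := ch3 (3*i+b+2) (i+1)
      rw [show 3*i+b+2+1 = 3*i+b+3 by omega] at hP
      push_cast at hB' hQ hT hS hR hU hP
      have eB' : (((3*i+j+b+5).choose (j+2)) : ℚ)
          = (3*(i:ℚ)+j+b+5) * (((3*i+j+b+4).choose (j+1)) : ℚ) / ((j:ℚ)+2) := by
        rw [eq_div_iff (by positivity)]; linear_combination hB'
      have eQ : (((3*i+j+b+4).choose (j+2)) : ℚ)
          = (3*(i:ℚ)+b+3) * (((3*i+j+b+4).choose (j+1)) : ℚ) / ((j:ℚ)+2) := by
        rw [eq_div_iff (by positivity)]; linear_combination hQ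
      have eT : (((3*i+j+b+5).choose (j+1)) : ℚ)
          = ((j:ℚ)+2) * (((3*i+j+b+5).choose (j+2)) : ℚ) / (3*(i:ℚ)+b+4) := by
        rw [eq_div_iff (by positivity)]; linear_combination -hT
      have eS : (((3*i+j+b+5).choose j) : ℚ)
          = ((j:ℚ)+1) * (((3*i+j+b+5).choose (j+1)) : ℚ) / (3*(i:ℚ)+b+5) := by
        rw [eq_div_iff (by positivity)]; linear_combination -hS
      have eR : (((3*i+b+5).choose (i+2)) : ℚ)
          = (3*(i:ℚ)+b+5) * (((3*i+b+4).choose (i+1)) : ℚ) / ((i:ℚ)+2) := by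
        rw [eq_div_iff (by positivity)]; linear_combination hR
      have eU : (((3*i+b+3).choose (i+1)) : ℚ)
          = (2*(i:ℚ)+b+3) * (((3*i+b+4).choose (i+1)) : ℚ) / (3*(i:ℚ)+b+4) := by
        rw [eq_div_iff (by positivity)]; linear_combination -hU
      have eP : (((3*i+b+2).choose (i+1)) : ℚ)
          = (2*(i:ℚ)+b+2) * (((3*i+b+3).choose (i+1)) : ℚ) / (3*(i:ℚ)+b+3) := by
        rw [eq_div_iff (by positivity)]; linear_combination -hP
      rw [eS, eT, eB', eQ, eR, eP, eU]
      have d1 : (3*(i:ℚ)+b+4) ≠ 0 := by positivity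
      have d2 : (3*(i:ℚ)+b+3) ≠ 0 := by positivity
      have d3 : (3*(i:ℚ)+b+5) ≠ 0 := by positivity
      have d4 : ((j:ℚ)+2) ≠ 0 := by positivity
      have d5 : ((i:ℚ)+2) ≠ 0 := by positivity
      have d6 : (3*((i:ℚ)+1)+((b:ℚ)+1)) ≠ 0 := by positivity
      have d7 : (2*(i:ℚ)+3+(j:ℚ)+((b:ℚ)+1)) ≠ 0 := by positivity
      field_simp
      ring

lemma claimA (a n : ℕ) (ha : 0 < a) :
    ((n:ℚ)+1) * ((n:ℚ)+(a:ℚ)+1) * (∑ k ∈ range ((n+1)/2+1), fq a (n+1) k)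
    = (2*(n:ℚ)+a) * (2*(n:ℚ)+a+1) * (∑ k ∈ range (n/2+1), fq a n k) := by
  have key : ∑ k ∈ range ((n+1)/2+1),
      (((n:ℚ)+1) * ((n:ℚ)+(a:ℚ)+1) * fq a (n+1) k
        - (if 2*k ≤ n then (2*(n:ℚ)+a) * (2*(n:ℚ)+a+1) * fq a n k else 0))
      = 0 := by
    rw [Finset.sum_congr rfl (fun k hk => step a n k ha (by
      have := Finset.mem_range.mp hk; omega))]
    rw [Finset.sum_range_sub (gq a n)]
    have h1 : gq a n ((n+1)/2+1) = 0 := by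
      have hcond : ¬ (2*((n+1)/2)+2 ≤ n+1) := by omega
      simp [gq, hcond]
    have h2 : gq a n 0 = 0 := rfl
    rw [h1, h2]; ring
  rw [Finset.sum_sub_distrib] at key
  have h3 : ∑ k ∈ range ((n+1)/2+1),
      (if 2*k ≤ n then (2*(n:ℚ)+a) * (2*(n:ℚ)+a+1) * fq a n k else 0)
      = ∑ k ∈ range (n/2+1), (2*(n:ℚ)+a) * (2*(n:ℚ)+a+1) * fq a n k := by
    rw [← Finset.sum_filter]
    apply Finset.sum_congr
    · ext x; simp only [Finset.mem_filter, Finset.mem_range]; omega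
    · intros; rfl
  rw [h3] at key
  rw [← Finset.mul_sum, ← Finset.mul_sum] at key
  linarith

lemma claimB (a n : ℕ) (ha : 0 < a) :
    ((n:ℚ)+1) * ((n:ℚ)+(a:ℚ)+1) * ((1 / (2*((n:ℚ)+1) + a)) * ((2*(n+1)+a).choose (n+1)))
    = (2*(n:ℚ)+a) * (2*(n:ℚ)+a+1) * ((1 / (2*(n:ℚ)+a)) * ((2*n+a).choose n)) := by
  have e : 2*(n+1)+a = (2*n+a+1)+1 := by omega
  rw [e]
  have h1 := ch1 (2*n+a+1) n
  have h2 := ch3 (2*n+a) n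
  push_cast at h1 h2 ⊢
  have ha' : (0:ℚ) < a := by exact_mod_cast ha
  have d1 : (2*(n:ℚ)+a) ≠ 0 := by positivity
  have d2 : ((n:ℚ)+1) ≠ 0 := by positivity
  have d3 : ((n:ℚ)+a+1) ≠ 0 := by positivity
  have d4 : (2*((n:ℚ)+1)+a) ≠ 0 := by positivity
  field_simp
  linear_combination ((n:ℚ)+a+1) * h1 + (2*(n:ℚ)+a+2) * h2

theorem sun_identity_3' (n a : ℕ) (ha : 0 < a) :
    ∑ k ∈ range (n / 2 + 1), fq a n k = (1 / (2 * (n : ℚ) + a)) * ((2 * n + a).choose n) := by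
  induction n with
  | zero =>
      simp only [fq]
      norm_num
  | succ n ih =>
      have hA := claimA a n ha
      rw [ih] at hA
      have hB := claimB a n ha
      have hc : ((n:ℚ)+1) * ((n:ℚ)+(a:ℚ)+1) ≠ 0 := by positivity
      have h := mul_left_cancel₀ hc (hA.trans hB.symm)
      rw [h]
      push_cast
      ring_nf

theorem sun_identity_3 (n a : ℕ) (ha : 0 < a) :
    ∑ k ∈ range (n / 2 + 1),
      (1 / (3 * (k : ℚ) + a)) * ((3 * k + a).choose k) * ((n + a + k - 1).choose (n - 2 * k)) =
    (1 / (2 * (n : ℚ) + a)) * ((2 * n + a).choose n) := by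
  exact sun_identity_3' n a ha
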